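/- Let Y be a Markov chain on a topological space X with a σ-finite invariant Borel measure μ, recurrent starting under μ. Let A be a Borel set with μ(A) > 0. Then the restricted measure μ_A = μ|_A is an invariant measure for the induced Markov chain Y^A obtained by sampling Y at its successive visits to A. -/

import Mathlib

open MeasureTheory Set
open scoped ENNReal

/-- First hitting time (at time ≥ 1) of a set `A` by a path `ω` (`0` if never hit). -/
noncomputable def hitTime {X : Type*} (A : Set X) (ω : ℕ → X) : ℕ :=
  sInf {n | 1 ≤ n ∧ ω n ∈ A}

namespace Stmt9Aux

variable {X : Type*} [MeasurableSpace X]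

/-- Paths that avoid `E` at times `1, …, n-1` and are in `B` at time `n`. -/
def tab (E B : Set X) (n : ℕ) : Set (ℕ → X) :=
  {ω | (∀ i, 1 ≤ i → i < n → ω i ∉ E) ∧ ω n ∈ B}

/-- Paths that never visit `E` at a time `≥ 1`. -/
def nev (E : Set X) : Set (ℕ → X) :=
  {ω | ∀ n, 1 ≤ n → ω n ∉ E}

lemma measurableSet_avoid (E : Set X) (hE : MeasurableSet E) (n : ℕ) :
    MeasurableSet {ω : ℕ → X | ∀ i, 1 ≤ i → i < n → ω i ∉ E} := by
  have h : {ω : ℕ → X | ∀ i, 1 ≤ i → i < n → ω i ∉ E}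
      = ⋂ i, ⋂ (_ : 1 ≤ i), ⋂ (_ : i < n), (fun ω : ℕ → X => ω i) ⁻¹' Eᶜ := by
    ext ω; simp [Set.mem_iInter, Set.mem_preimage]
  rw [h]
  exact MeasurableSet.iInter fun i => MeasurableSet.iInter fun _ =>
    MeasurableSet.iInter fun _ => measurable_pi_apply i hE.compl

lemma measurableSet_tab {E B : Set X} (hE : MeasurableSet E) (hB : MeasurableSet B) (n : ℕ) :
    MeasurableSet (tab E B n) :=
  (measurableSet_avoid E hE n).inter (measurable_pi_apply n hB)

lemma measurableSet_nev {E : Set X} (hE : MeasurableSet E) :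
    MeasurableSet (nev E) := by
  have h : nev E = ⋂ i, ⋂ (_ : 1 ≤ i), (fun ω : ℕ → X => ω i) ⁻¹' Eᶜ := by
    ext ω; simp [nev, Set.mem_iInter, Set.mem_preimage]
  rw [h]
  exact MeasurableSet.iInter fun i => MeasurableSet.iInter fun _ =>
    measurable_pi_apply i hE.compl

lemma tab_one (E B : Set X) : tab E B 1 = (fun ω : ℕ → X => ω 1) ⁻¹' B := by
  ext ω
  simp only [tab, Set.mem_setOf_eq, Set.mem_preimage]
  constructor
  · rintro ⟨-, h⟩; exact h
  · intro h; exact ⟨fun i hi1 hi2 => by omega, h⟩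

lemma tab_shift (E B : Set X) (n : ℕ) :
    (fun ω : ℕ → X => fun k => ω (k + 1)) ⁻¹' (tab E B (n + 1) ∩ {ω | ω 0 ∉ E})
      = tab E B (n + 2) := by
  ext ω
  simp only [tab, Set.mem_preimage, Set.mem_inter_iff, Set.mem_setOf_eq]
  constructor
  · rintro ⟨⟨h1, h2⟩, h3⟩
    refine ⟨fun i hi1 hi2 => ?_, h2⟩
    rcases i with _ | j
    · omega
    · rcases Nat.eq_zero_or_pos j with hj | hj
      · subst hj; exact h3
      · exact h1 j (by omega) (by omega)
  · rintro ⟨h1, h2⟩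
    exact ⟨⟨fun i hi1 hi2 => h1 (i + 1) (by omega) (by omega), h2⟩, h1 1 le_rfl (by omega)⟩

lemma tab_subset_tab {E E' : Set X} (B : Set X) (h : E' ⊆ E) (n : ℕ) :
    tab E B n ⊆ tab E' B n := by
  rintro ω ⟨h1, h2⟩
  exact ⟨fun i hi1 hi2 hiE => h1 i hi1 hi2 (h hiE), h2⟩

lemma tab_disjoint {E B : Set X} (hBE : B ⊆ E) :
    Pairwise (Function.onFun Disjoint fun n : ℕ => tab E B (n + 1)) := by
  intro i j hij
  wlog hlt : i < j generalizing i j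
  · exact (this hij.symm (by omega)).symm
  refine Set.disjoint_left.2 fun ω hi hj => ?_
  exact hj.1 (i + 1) (by omega) (by omega) (hBE hi.2)

lemma nev_disjoint_tab {E B : Set X} (hBE : B ⊆ E) (n : ℕ) :
    Disjoint (nev E) (tab E B (n + 1)) :=
  Set.disjoint_left.2 fun ω h1 h2 => h1 (n + 1) (by omega) (hBE h2.2)

/-- Decomposition of the induced-step event according to the first hitting time. -/
lemma hit_decomp (E B : Set X) (hBE : B ⊆ E) :
    {ω : ℕ → X | ω (hitTime E ω) ∈ B}
      = (⋃ n : ℕ, tab E B (n + 1)) ∪ (nev E ∩ {ω | ω 0 ∈ B}) := by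
  ext ω
  constructor
  · intro hmem
    have h : ω (hitTime E ω) ∈ B := hmem
    by_cases hne : {n | 1 ≤ n ∧ ω n ∈ E}.Nonempty
    · left
      have hT := Nat.sInf_mem hne
      have hTdef : hitTime E ω = sInf {n | 1 ≤ n ∧ ω n ∈ E} := rfl
      rw [hTdef] at h
      set T := sInf {n | 1 ≤ n ∧ ω n ∈ E} with hTset
      have hT1 : 1 ≤ T := hT.1
      refine Set.mem_iUnion.2 ⟨T - 1, ?_⟩
      have hT1' : T - 1 + 1 = T := by omega
      rw [hT1']
      refine ⟨fun i hi1 hi2 hiE => ?_, h⟩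
      have := Nat.sInf_le (show i ∈ {n | 1 ≤ n ∧ ω n ∈ E} from ⟨hi1, hiE⟩)
      omega
    · right
      have hT0 : hitTime E ω = 0 := by
        rw [show hitTime E ω = sInf {n | 1 ≤ n ∧ ω n ∈ E} from rfl,
          Set.not_nonempty_iff_eq_empty.mp hne, Nat.sInf_empty]
      rw [hT0] at h
      exact ⟨fun n hn hnE => hne ⟨n, hn, hnE⟩, h⟩
  · intro h
    rcases h with h | ⟨h1, h2⟩
    · rcases Set.mem_iUnion.1 h with ⟨n, htab, hB⟩
      have hmem : n + 1 ∈ {m | 1 ≤ m ∧ ω m ∈ E} := ⟨by omega, hBE hB⟩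
      have hne : {m | 1 ≤ m ∧ ω m ∈ E}.Nonempty := ⟨n + 1, hmem⟩
      have hT := Nat.sInf_mem hne
      have hle : hitTime E ω ≤ n + 1 := Nat.sInf_le hmem
      have hTeq : hitTime E ω = n + 1 := by
        by_contra hne'
        have hlt : hitTime E ω < n + 1 := by omega
        exact htab _ hT.1 hlt hT.2
      show ω (hitTime E ω) ∈ B
      rw [hTeq]; exact hB
    · have hemp : {n | 1 ≤ n ∧ ω n ∈ E} = ∅ := by
        rw [Set.eq_empty_iff_forall_notMem]
        rintro n ⟨hn1, hn2⟩
        exact h1 n hn1 hn2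
      have hT0 : hitTime E ω = 0 := by
        rw [show hitTime E ω = sInf {n | 1 ≤ n ∧ ω n ∈ E} from rfl, hemp, Nat.sInf_empty]
      show ω (hitTime E ω) ∈ B
      rw [hT0]; exact h2

/-- Decomposition of the starting event according to the first return time. -/
lemma start_decomp (E : Set X) :
    {ω : ℕ → X | ω 0 ∈ E}
      = (⋃ n : ℕ, tab E E (n + 1) ∩ {ω | ω 0 ∈ E}) ∪ (nev E ∩ {ω | ω 0 ∈ E}) := by
  ext ω
  constructor
  · intro h0
    by_cases hne : {n | 1 ≤ n ∧ ω n ∈ E}.Nonempty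
    · left
      have hT := Nat.sInf_mem hne
      set T := sInf {n | 1 ≤ n ∧ ω n ∈ E} with hTdef
      have hT1 : 1 ≤ T := hT.1
      refine Set.mem_iUnion.2 ⟨T - 1, ?_, h0⟩
      have hT1' : T - 1 + 1 = T := by omega
      rw [hT1']
      refine ⟨fun i hi1 hi2 hiE => ?_, hT.2⟩
      have := Nat.sInf_le (show i ∈ {n | 1 ≤ n ∧ ω n ∈ E} from ⟨hi1, hiE⟩)
      omega
    · right
      exact ⟨fun n hn hnE => hne ⟨n, hn, hnE⟩, h0⟩
  · rintro (h | h)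
    · rcases Set.mem_iUnion.1 h with ⟨n, -, h0⟩
      exact h0
    · exact h.2

/-- `map` commutes with `bind` for Giry-monad measures. -/
lemma map_bind' {α β γ : Type*} [MeasurableSpace α] [MeasurableSpace β] [MeasurableSpace γ]
    (m : Measure α) (g : α → Measure β) (f : β → γ) (hg : Measurable g) (hf : Measurable f) :
    (m.bind g).map f = m.bind fun a => (g a).map f := by
  rw [← Measure.bind_dirac_eq_map _ hf, Measure.bind_bind hg.aemeasurable
    (show Measurable fun x => Measure.dirac (f x) from Measure.measurable_dirac.comp hf).aemeasurable]
  simp_rw [Measure.bind_dirac_eq_map _ hf]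

end Stmt9Aux

open Stmt9Aux

/-- Let `Y` be a Markov chain on a topological space `X`, given by its family `P` of path-space
laws (`P x` is the law of the chain started at `x`; `hP0` and `hPstep` encode the
time-homogeneous Markov property). If `Y` has a σ-finite invariant Borel measure `μ`, is
recurrent starting under `μ`, and `A` is Borel with `μ A > 0`, then `μ|_A` is an invariant
measure for the Markov chain induced on `A` (sampling `Y` at its successive visits to `A`). -/
theorem stmt9 {X : Type*} [TopologicalSpace X] [MeasurableSpace X] [BorelSpace X]
    (P : X → Measure (ℕ → X)) (hPmeas : Measurable P)
    (hPprob : ∀ x, IsProbabilityMeasure (P x))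
    (hP0 : ∀ x, (P x).map (fun ω => ω 0) = Measure.dirac x)
    (hPstep : ∀ x, (P x).map (fun ω n => ω (n + 1)) = ((P x).map (fun ω => ω 1)).bind P)
    (μ : Measure X) [SigmaFinite μ]
    (hinv : Measure.map (fun ω => ω 1) (μ.bind P) = μ)
    (hrecur : ∀ B : Set X, MeasurableSet B → 0 < μ B →
      ((μ.restrict B).bind P) {ω | ∀ n, 1 ≤ n → ω n ∉ B} = 0)
    (A : Set X) (hA : MeasurableSet A) (hApos : 0 < μ A) :
    ∀ B : Set X, MeasurableSet B → B ⊆ A →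
      μ B = ∫⁻ x in A, (P x) {ω | ω (hitTime A ω) ∈ B} ∂μ := by
  have hev : ∀ n : ℕ, Measurable (fun ω : ℕ → X => ω n) := measurable_pi_apply
  have hshift : Measurable (fun ω : ℕ → X => fun n => ω (n + 1)) :=
    measurable_pi_lambda _ fun n => measurable_pi_apply (n + 1)
  set Q : Measure (ℕ → X) := μ.bind P with hQdef
  -- shift invariance of the path measure
  have hQshift : Q.map (fun ω n => ω (n + 1)) = Q := by
    rw [hQdef, map_bind' μ P _ hPmeas hshift]
    have h1 : (fun x => (P x).map (fun ω n => ω (n + 1)))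
        = fun x => ((P x).map (fun ω => ω 1)).bind P := funext hPstep
    rw [h1, ← Measure.bind_bind
      (show Measurable fun x => (P x).map (fun ω => ω 1)
        from (Measure.measurable_map _ (hev 1)).comp hPmeas).aemeasurable hPmeas.aemeasurable,
      ← map_bind' μ P _ hPmeas (hev 1), hinv]
  have hQ0 : Q.map (fun ω => ω 0) = μ := by
    rw [hQdef, map_bind' μ P _ hPmeas (hev 0)]
    have h1 : (fun x => (P x).map (fun ω => ω 0)) = Measure.dirac := funext hP0
    rw [h1, Measure.bind_dirac]
  have hQn : ∀ n : ℕ, Q.map (fun ω => ω n) = μ := by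
    intro n
    induction n with
    | zero => exact hQ0
    | succ k ih =>
      have h1 : (fun ω : ℕ → X => ω (k + 1))
          = (fun ω : ℕ → X => ω k) ∘ (fun ω n => ω (n + 1)) := rfl
      rw [h1, ← Measure.map_map (hev k) hshift, hQshift, ih]
  -- value of Q on time-n cylinders
  have hQcyl : ∀ (n : ℕ) (C : Set X), MeasurableSet C → Q ((fun ω : ℕ → X => ω n) ⁻¹' C) = μ C := by
    intro n C hC
    rw [← Measure.map_apply (hev n) hC, hQn n]
  -- relation between Q and the bind of restricted measures
  have hrestr : ∀ (E : Set X), MeasurableSet E → ∀ S : Set (ℕ → X), MeasurableSet S →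
      ((μ.restrict E).bind P) S = Q (S ∩ {ω | ω 0 ∈ E}) := by
    intro E hE S hS
    have hE0 : MeasurableSet {ω : ℕ → X | ω 0 ∈ E} := hev 0 hE
    rw [Measure.bind_apply hS hPmeas.aemeasurable, hQdef, Measure.bind_apply (hS.inter hE0) hPmeas.aemeasurable,
      ← lintegral_indicator hE]
    apply lintegral_congr
    intro x
    have hP0' : ∀ (C : Set X), MeasurableSet C → (P x) ((fun ω : ℕ → X => ω 0) ⁻¹' C)
        = Set.indicator C 1 x := by
      intro C hC
      rw [← Measure.map_apply (hev 0) hC, hP0 x, Measure.dirac_apply' x hC]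
    by_cases hx : x ∈ E
    · rw [Set.indicator_of_mem hx]
      symm
      apply measure_inter_conull
      have : {ω : ℕ → X | ω 0 ∈ E}ᶜ = (fun ω : ℕ → X => ω 0) ⁻¹' Eᶜ := rfl
      rw [this, hP0' Eᶜ hE.compl, Set.indicator_of_notMem (by simpa using hx)]
    · rw [Set.indicator_of_notMem hx]
      symm
      have hle : (P x) (S ∩ {ω | ω 0 ∈ E}) ≤ (P x) ((fun ω : ℕ → X => ω 0) ⁻¹' E) :=
        measure_mono (Set.inter_subset_right)
      rw [hP0' E hE, Set.indicator_of_notMem hx] at hle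
      simpa using hle
  -- the partial-sum identity, for an arbitrary taboo set E and target B ⊆ E
  have hpartial : ∀ (E B : Set X), MeasurableSet E → MeasurableSet B → ∀ N : ℕ,
      μ B = (∑ n ∈ Finset.range N, Q (tab E B (n + 1) ∩ {ω | ω 0 ∈ E})) + Q (tab E B (N + 1)) := by
    intro E B hE hB N
    induction N with
    | zero =>
      simp only [Finset.range_zero, Finset.sum_empty, zero_add]
      rw [tab_one, hQcyl 1 B hB]
    | succ k ih =>
      rw [ih, Finset.sum_range_succ]
      have hmemnot : MeasurableSet {ω : ℕ → X | ω 0 ∉ E} := by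
        exact hev 0 hE.compl
      have hsplit : Q (tab E B (k + 1))
          = Q (tab E B (k + 1) ∩ {ω | ω 0 ∈ E}) + Q (tab E B (k + 1) ∩ {ω | ω 0 ∉ E}) := by
        have h1 : tab E B (k + 1) = (tab E B (k + 1) ∩ {ω | ω 0 ∈ E})
            ∪ (tab E B (k + 1) ∩ {ω | ω 0 ∉ E}) := by
          ext ω
          by_cases hω : ω 0 ∈ E <;> simp [hω]
        have h2 : Q ((tab E B (k + 1) ∩ {ω | ω 0 ∈ E}) ∪ (tab E B (k + 1) ∩ {ω | ω 0 ∉ E}))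
            = Q (tab E B (k + 1) ∩ {ω | ω 0 ∈ E}) + Q (tab E B (k + 1) ∩ {ω | ω 0 ∉ E}) :=
          measure_union (Set.disjoint_left.2 fun ω ha hb => hb.2 ha.2)
            ((measurableSet_tab hE hB (k + 1)).inter hmemnot)
        rw [← h1] at h2
        exact h2
      have hrec : Q (tab E B (k + 1) ∩ {ω | ω 0 ∉ E}) = Q (tab E B (k + 2)) := by
        rw [← tab_shift E B k, ← Measure.map_apply hshift
          ((measurableSet_tab hE hB (k + 1)).inter hmemnot), hQshift]
      rw [hsplit, hrec, add_assoc]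
  intro B hB hBA
  -- the key quantity
  have hUmeas : ∀ (B' : Set X), MeasurableSet B' → ∀ n : ℕ,
      MeasurableSet (tab A B' (n + 1) ∩ {ω : ℕ → X | ω 0 ∈ A}) := fun B' hB' n =>
    (measurableSet_tab hA hB' (n + 1)).inter ((hev 0) hA)
  -- step 1 : the RHS equals Q of the union of the taboo events started in A
  have hstep1 : ∀ (B' : Set X), MeasurableSet B' → B' ⊆ A →
      (∫⁻ x in A, (P x) {ω | ω (hitTime A ω) ∈ B'} ∂μ)
        = Q (⋃ n : ℕ, tab A B' (n + 1) ∩ {ω | ω 0 ∈ A}) := by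
    intro B' hB' hB'A
    have hset := hit_decomp A B' hB'A
    have hmeasset : MeasurableSet ((⋃ n : ℕ, tab A B' (n + 1)) ∪ (nev A ∩ {ω | ω 0 ∈ B'})) :=
      (MeasurableSet.iUnion fun n => measurableSet_tab hA hB' (n + 1)).union
        ((measurableSet_nev hA).inter ((hev 0) hB'))
    calc (∫⁻ x in A, (P x) {ω | ω (hitTime A ω) ∈ B'} ∂μ)
        = ((μ.restrict A).bind P) ((⋃ n : ℕ, tab A B' (n + 1)) ∪ (nev A ∩ {ω | ω 0 ∈ B'})) := by
          rw [Measure.bind_apply hmeasset hPmeas.aemeasurable]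
          apply lintegral_congr
          intro x
          rw [← hset]
      _ = ((μ.restrict A).bind P) (⋃ n : ℕ, tab A B' (n + 1))
            + ((μ.restrict A).bind P) (nev A ∩ {ω | ω 0 ∈ B'}) := by
          apply measure_union
          · exact Set.disjoint_right.2 fun ω hω h' => by
              rcases Set.mem_iUnion.1 h' with ⟨n, hn⟩
              exact (nev_disjoint_tab hB'A n).le_bot ⟨hω.1, hn⟩
          · exact (measurableSet_nev hA).inter ((hev 0) hB')
      _ = ((μ.restrict A).bind P) (⋃ n : ℕ, tab A B' (n + 1)) := by
          have hle : ((μ.restrict A).bind P) (nev A ∩ {ω | ω 0 ∈ B'})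
              ≤ ((μ.restrict A).bind P) (nev A) := measure_mono Set.inter_subset_left
          have h0 : ((μ.restrict A).bind P) (nev A) = 0 := hrecur A hA hApos
          rw [h0] at hle
          simp [Nat.le_zero.mp, le_antisymm hle zero_le]
      _ = ∑' n : ℕ, ((μ.restrict A).bind P) (tab A B' (n + 1)) :=
          measure_iUnion (tab_disjoint hB'A) fun n => measurableSet_tab hA hB' (n + 1)
      _ = ∑' n : ℕ, Q (tab A B' (n + 1) ∩ {ω | ω 0 ∈ A}) := by
          congr 1
          ext n
          exact hrestr A hA _ (measurableSet_tab hA hB' (n + 1))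
      _ = Q (⋃ n : ℕ, tab A B' (n + 1) ∩ {ω | ω 0 ∈ A}) := by
          symm
          apply measure_iUnion
          · intro i j hij
            exact ((tab_disjoint hB'A) hij).mono Set.inter_subset_left Set.inter_subset_left
          · exact hUmeas B' hB'
  -- step 2 : for B' of finite measure, μ B' equals that quantity
  have hstep2 : ∀ (B' : Set X), MeasurableSet B' → B' ⊆ A → μ B' ≠ ∞ →
      μ B' = Q (⋃ n : ℕ, tab A B' (n + 1) ∩ {ω | ω 0 ∈ A}) := by
    intro B' hB' hB'A hfin
    by_cases hzero : μ B' = 0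
    · -- trivial case
      rw [hzero]
      symm
      have hle : Q (⋃ n : ℕ, tab A B' (n + 1) ∩ {ω | ω 0 ∈ A})
          ≤ ∑' n : ℕ, Q (tab A B' (n + 1)) :=
        le_trans (measure_iUnion_le _) (ENNReal.tsum_le_tsum fun n =>
          measure_mono Set.inter_subset_left)
      have hz : ∀ n : ℕ, Q (tab A B' (n + 1)) = 0 := by
        intro n
        have h1 : tab A B' (n + 1) ⊆ (fun ω : ℕ → X => ω (n + 1)) ⁻¹' B' :=
          fun ω hω => hω.2
        have h2 := measure_mono (μ := Q) h1
        rw [hQcyl (n + 1) B' hB', hzero] at h2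
        exact le_antisymm h2 zero_le
      simp only [hz, tsum_zero] at hle
      exact le_antisymm hle zero_le
    · have hpos : 0 < μ B' := pos_iff_ne_zero.2 hzero
      -- first return decomposition with taboo set B'
      have hstart : Q {ω : ℕ → X | ω 0 ∈ B'}
          = Q (⋃ n : ℕ, tab B' B' (n + 1) ∩ {ω | ω 0 ∈ B'}) := by
        have hdisj1 : Disjoint (⋃ n : ℕ, tab B' B' (n + 1) ∩ {ω | ω 0 ∈ B'})
            (nev B' ∩ {ω | ω 0 ∈ B'}) :=
          Set.disjoint_right.2 fun ω hω h' => by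
            rcases Set.mem_iUnion.1 h' with ⟨n, hn⟩
            exact (nev_disjoint_tab (le_refl B') n).le_bot ⟨hω.1, hn.1⟩
        conv_lhs => rw [start_decomp B']
        rw [measure_union hdisj1 ((measurableSet_nev hB').inter
          (show MeasurableSet {ω : ℕ → X | ω 0 ∈ B'} by exact hev 0 hB'))]
        have h0 : Q (nev B' ∩ {ω | ω 0 ∈ B'}) = 0 := by
          rw [← hrestr B' hB' (nev B') (measurableSet_nev hB')]
          exact hrecur B' hB' hpos
        rw [h0, add_zero]
      have hQ0B : Q {ω : ℕ → X | ω 0 ∈ B'} = μ B' := hQcyl 0 B' hB'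
      -- the first-return probabilities sum to μ B'
      have hsum' : HasSum (fun n : ℕ => Q (tab B' B' (n + 1) ∩ {ω | ω 0 ∈ B'})) (μ B') := by
        have hUn : Q (⋃ n : ℕ, tab B' B' (n + 1) ∩ {ω | ω 0 ∈ B'})
            = ∑' n : ℕ, Q (tab B' B' (n + 1) ∩ {ω | ω 0 ∈ B'}) :=
          measure_iUnion
            (fun i j hij => ((tab_disjoint (le_refl B')) hij).mono Set.inter_subset_left
              Set.inter_subset_left)
            (fun n => (measurableSet_tab hB' hB' (n + 1)).inter
              (show MeasurableSet {ω : ℕ → X | ω 0 ∈ B'} by exact hev 0 hB'))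
        rw [← hstart, hQ0B] at hUn
        exact ENNReal.summable.hasSum_iff.mpr hUn.symm
      -- hence the remainders for taboo set B' tend to zero
      have hrem' : Filter.Tendsto (fun N : ℕ => Q (tab B' B' (N + 1))) Filter.atTop (nhds 0) := by
        have hpar := hpartial B' B' hB' hB'
        have heq : ∀ N : ℕ, Q (tab B' B' (N + 1))
            = μ B' - (∑ n ∈ Finset.range N, Q (tab B' B' (n + 1) ∩ {ω | ω 0 ∈ B'})) := by
          intro N
          rw [hpar N, ENNReal.add_sub_cancel_left]
          intro hcon
          apply hfin
          rw [hpar N, hcon]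
          simp
        simp only [heq]
        have htend : Filter.Tendsto
            (fun N : ℕ => ∑ n ∈ Finset.range N, Q (tab B' B' (n + 1) ∩ {ω | ω 0 ∈ B'}))
            Filter.atTop (nhds (μ B')) := hsum'.tendsto_sum_nat
        have hsub := ENNReal.Tendsto.sub (tendsto_const_nhds (x := μ B')) htend (Or.inl hfin)
        simpa using hsub
      -- remainders for taboo set A are smaller, hence also tend to zero
      have hrem : Filter.Tendsto (fun N : ℕ => Q (tab A B' (N + 1))) Filter.atTop (nhds 0) := by
        apply tendsto_of_tendsto_of_tendsto_of_le_of_le tendsto_const_nhds hrem'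
        · intro N; exact zero_le
        · intro N; exact measure_mono (tab_subset_tab B' hB'A (N + 1))
      -- now pass to the limit in the partial-sum identity for taboo set A
      have hUnA : Q (⋃ n : ℕ, tab A B' (n + 1) ∩ {ω | ω 0 ∈ A})
          = ∑' n : ℕ, Q (tab A B' (n + 1) ∩ {ω | ω 0 ∈ A}) :=
        measure_iUnion
          (fun i j hij => ((tab_disjoint hB'A) hij).mono Set.inter_subset_left
            Set.inter_subset_left)
          (fun n => hUmeas B' hB' n)
      have htendA : Filter.Tendsto
          (fun N : ℕ => (∑ n ∈ Finset.range N, Q (tab A B' (n + 1) ∩ {ω | ω 0 ∈ A}))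
            + Q (tab A B' (N + 1)))
          Filter.atTop (nhds (Q (⋃ n : ℕ, tab A B' (n + 1) ∩ {ω | ω 0 ∈ A}))) := by
        have h1 : Filter.Tendsto
            (fun N : ℕ => ∑ n ∈ Finset.range N, Q (tab A B' (n + 1) ∩ {ω | ω 0 ∈ A}))
            Filter.atTop (nhds (∑' n : ℕ, Q (tab A B' (n + 1) ∩ {ω | ω 0 ∈ A}))) :=
          ENNReal.summable.hasSum.tendsto_sum_nat
        rw [hUnA]
        simpa using Filter.Tendsto.add h1 hrem
      have hconst : Filter.Tendsto
          (fun N : ℕ => (∑ n ∈ Finset.range N, Q (tab A B' (n + 1) ∩ {ω | ω 0 ∈ A}))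
            + Q (tab A B' (N + 1)))
          Filter.atTop (nhds (μ B')) := by
        have : (fun N : ℕ => (∑ n ∈ Finset.range N, Q (tab A B' (n + 1) ∩ {ω | ω 0 ∈ A}))
            + Q (tab A B' (N + 1))) = fun _ => μ B' := by
          funext N
          exact (hpartial A B' hA hB' N).symm
        rw [this]
        exact tendsto_const_nhds
      exact tendsto_nhds_unique hconst htendA
  -- step 3 : exhaustion by sets of finite measure
  rw [hstep1 B hB hBA]
  set C : ℕ → Set X := fun k => B ∩ spanningSets μ k with hCdef
  have hCmeas : ∀ k, MeasurableSet (C k) := fun k => hB.inter (measurableSet_spanningSets μ k)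
  have hCsub : ∀ k, C k ⊆ A := fun k => Set.inter_subset_left.trans hBA
  have hCfin : ∀ k, μ (C k) ≠ ∞ := fun k =>
    ((measure_mono Set.inter_subset_right).trans_lt (measure_spanningSets_lt_top μ k)).ne
  have hCmono : Monotone C := fun i j hij =>
    Set.inter_subset_inter_right B (monotone_spanningSets μ hij)
  have hCunion : ⋃ k, C k = B := by
    rw [hCdef, ← Set.inter_iUnion, iUnion_spanningSets, Set.inter_univ]
  -- LHS : continuity of measure
  have hLHS : Filter.Tendsto (fun k => μ (C k)) Filter.atTop (nhds (μ B)) := by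
    have := tendsto_measure_iUnion_atTop (μ := μ) hCmono
    rwa [hCunion] at this
  -- RHS : continuity of measure on the path space
  have hRHS : Filter.Tendsto (fun k => Q (⋃ n : ℕ, tab A (C k) (n + 1) ∩ {ω | ω 0 ∈ A}))
      Filter.atTop (nhds (Q (⋃ n : ℕ, tab A B (n + 1) ∩ {ω | ω 0 ∈ A}))) := by
    have hmono : Monotone (fun k => ⋃ n : ℕ, tab A (C k) (n + 1) ∩ {ω : ℕ → X | ω 0 ∈ A}) := by
      intro i j hij
      refine Set.iUnion_mono fun n => Set.inter_subset_inter_left _ ?_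
      rintro ω ⟨h1, h2⟩
      exact ⟨h1, hCmono hij h2⟩
    have hun : (⋃ k, ⋃ n : ℕ, tab A (C k) (n + 1) ∩ {ω : ℕ → X | ω 0 ∈ A})
        = ⋃ n : ℕ, tab A B (n + 1) ∩ {ω : ℕ → X | ω 0 ∈ A} := by
      rw [Set.iUnion_comm]
      refine Set.iUnion_congr fun n => ?_
      ext ω
      simp only [Set.mem_iUnion, Set.mem_inter_iff]
      constructor
      · rintro ⟨k, ⟨h1, h2⟩, h3⟩
        exact ⟨⟨h1, h2.1⟩, h3⟩
      · rintro ⟨⟨h1, h2⟩, h3⟩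
        rcases Set.mem_iUnion.1 (hCunion ▸ h2 : ω (n+1) ∈ ⋃ k, C k) with ⟨k, hk⟩
        exact ⟨k, ⟨h1, hk⟩, h3⟩
    have := tendsto_measure_iUnion_atTop (μ := Q) hmono
    rwa [hun] at this
  have heqk : ∀ k, μ (C k) = Q (⋃ n : ℕ, tab A (C k) (n + 1) ∩ {ω | ω 0 ∈ A}) := fun k =>
    hstep2 (C k) (hCmeas k) (hCsub k) (hCfin k)
  have : Filter.Tendsto (fun k => μ (C k)) Filter.atTop
      (nhds (Q (⋃ n : ℕ, tab A B (n + 1) ∩ {ω | ω 0 ∈ A}))) := by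
    simpa only [← heqk] using hRHS
  exact tendsto_nhds_unique hLHS this
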